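/- Let γ_M : ℝ² → ℝ⁵ be given by γ_M(t₁,t₂) = (t₁, t₂, t₁², 2t₁t₂, t₂²), and for f : ℝ⁵ → ℝ define R f(x) = ∫_{[-1,1]²} f(x + γ_M(t)) dt. If p, q ∈ [1,∞] satisfy q > p and (1/p, 1/q) lies outside the closed triangle given by the convex hull of the points (0,0), (1,1), and (5/8, 3/8), then there is no finite constant C such that ‖R f‖_{L^q(ℝ⁵)} ≤ C ‖f‖_{L^p(ℝ⁵)} holds for all nonnegative f ∈ L^p(ℝ⁵). -/

import Mathlib

open MeasureTheory Set
open scoped ENNReal NNReal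

noncomputable def gammaM (t : Fin 2 → ℝ) : Fin 5 → ℝ :=
  ![t 0, t 1, (t 0) ^ 2, 2 * t 0 * t 1, (t 1) ^ 2]

section AuxSharp

/-! ### Arithmetic helper lemmas -/

lemma arB0 (δ x0 x2 t0 : ℝ) (hδ0 : 0 < δ) (hδ1 : δ ≤ 1)
    (h1 : -δ ≤ x0) (h2 : x0 ≤ δ) (h3 : -δ ≤ x2) (h4 : x2 ≤ δ) (h5 : -1 ≤ t0) (h6 : t0 ≤ 1) :
    -(4*δ) ≤ x2 + t0^2 - (x0 + t0)^2 ∧ x2 + t0^2 - (x0 + t0)^2 ≤ 4*δ := by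
  constructor <;>
  nlinarith [mul_nonneg (by linarith : (0:ℝ) ≤ δ - x0) (by linarith : (0:ℝ) ≤ 1 - t0),
    mul_nonneg (by linarith : (0:ℝ) ≤ δ + x0) (by linarith : (0:ℝ) ≤ 1 + t0),
    mul_nonneg (by linarith : (0:ℝ) ≤ δ - x0) (by linarith : (0:ℝ) ≤ 1 + t0),
    mul_nonneg (by linarith : (0:ℝ) ≤ δ + x0) (by linarith : (0:ℝ) ≤ 1 - t0),
    mul_nonneg (by linarith : (0:ℝ) ≤ δ - x0) (by linarith : (0:ℝ) ≤ δ + x0),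
    mul_nonneg hδ0.le (by linarith : (0:ℝ) ≤ 1 - δ)]

lemma arB1 (δ x0 x1 x3 t0 t1 : ℝ) (hδ0 : 0 < δ) (hδ1 : δ ≤ 1)
    (h1 : -δ ≤ x0) (h2 : x0 ≤ δ) (h1' : -δ ≤ x1) (h2' : x1 ≤ δ)
    (h3 : -δ ≤ x3) (h4 : x3 ≤ δ) (h5 : -1 ≤ t0) (h6 : t0 ≤ 1) (h5' : -1 ≤ t1) (h6' : t1 ≤ 1) :
    -(7*δ) ≤ x3 + 2*t0*t1 - 2*(x0 + t0)*(x1 + t1) ∧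
      x3 + 2*t0*t1 - 2*(x0 + t0)*(x1 + t1) ≤ 7*δ := by
  constructor <;>
  nlinarith [mul_nonneg (by linarith : (0:ℝ) ≤ δ - x0) (by linarith : (0:ℝ) ≤ 1 - t1),
    mul_nonneg (by linarith : (0:ℝ) ≤ δ + x0) (by linarith : (0:ℝ) ≤ 1 + t1),
    mul_nonneg (by linarith : (0:ℝ) ≤ δ - x0) (by linarith : (0:ℝ) ≤ 1 + t1),
    mul_nonneg (by linarith : (0:ℝ) ≤ δ + x0) (by linarith : (0:ℝ) ≤ 1 - t1),
    mul_nonneg (by linarith : (0:ℝ) ≤ δ - x1) (by linarith : (0:ℝ) ≤ 1 - t0),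
    mul_nonneg (by linarith : (0:ℝ) ≤ δ + x1) (by linarith : (0:ℝ) ≤ 1 + t0),
    mul_nonneg (by linarith : (0:ℝ) ≤ δ - x1) (by linarith : (0:ℝ) ≤ 1 + t0),
    mul_nonneg (by linarith : (0:ℝ) ≤ δ + x1) (by linarith : (0:ℝ) ≤ 1 - t0),
    mul_nonneg (by linarith : (0:ℝ) ≤ δ - x0) (by linarith : (0:ℝ) ≤ δ - x1),
    mul_nonneg (by linarith : (0:ℝ) ≤ δ + x0) (by linarith : (0:ℝ) ≤ δ + x1),
    mul_nonneg (by linarith : (0:ℝ) ≤ δ - x0) (by linarith : (0:ℝ) ≤ δ + x1),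
    mul_nonneg (by linarith : (0:ℝ) ≤ δ + x0) (by linarith : (0:ℝ) ≤ δ - x1),
    mul_nonneg hδ0.le (by linarith : (0:ℝ) ≤ 1 - δ)]

lemma arA0 (δ x0 x2 t0 : ℝ) (hδ0 : 0 < δ) (hδ1 : δ ≤ 1)
    (h1 : -(1:ℝ)/2 ≤ x0) (h2 : x0 ≤ 1/2)
    (h3 : -(δ/4) ≤ x2 + x0^2) (h4 : x2 + x0^2 ≤ δ/4)
    (h5 : -(δ/4) ≤ t0 + x0) (h6 : t0 + x0 ≤ δ/4) :
    -δ ≤ x2 + t0^2 ∧ x2 + t0^2 ≤ δ := by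
  constructor <;>
  nlinarith [mul_nonneg (by linarith : (0:ℝ) ≤ δ/4 - (t0 + x0)) (by linarith : (0:ℝ) ≤ δ/4 + (t0 + x0)),
    mul_nonneg (by linarith : (0:ℝ) ≤ δ/4 - (t0 + x0)) (by linarith : (0:ℝ) ≤ 1/2 - x0),
    mul_nonneg (by linarith : (0:ℝ) ≤ δ/4 + (t0 + x0)) (by linarith : (0:ℝ) ≤ 1/2 + x0),
    mul_nonneg (by linarith : (0:ℝ) ≤ δ/4 - (t0 + x0)) (by linarith : (0:ℝ) ≤ 1/2 + x0),
    mul_nonneg (by linarith : (0:ℝ) ≤ δ/4 + (t0 + x0)) (by linarith : (0:ℝ) ≤ 1/2 - x0),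
    mul_nonneg hδ0.le (by linarith : (0:ℝ) ≤ 1 - δ)]

set_option maxHeartbeats 4000000 in
lemma arA1 (δ x0 x1 x3 t0 t1 : ℝ) (hδ0 : 0 < δ) (hδ1 : δ ≤ 1)
    (h1 : -(1:ℝ)/2 ≤ x0) (h2 : x0 ≤ 1/2) (h1' : -(1:ℝ)/2 ≤ x1) (h2' : x1 ≤ 1/2)
    (h3 : -(δ/4) ≤ x3 + 2*x0*x1) (h4 : x3 + 2*x0*x1 ≤ δ/4)
    (h5 : -(δ/4) ≤ t0 + x0) (h6 : t0 + x0 ≤ δ/4)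
    (h5' : -(δ/4) ≤ t1 + x1) (h6' : t1 + x1 ≤ δ/4) :
    -δ ≤ x3 + 2*t0*t1 ∧ x3 + 2*t0*t1 ≤ δ := by
  constructor <;>
  nlinarith [mul_nonneg (by linarith : (0:ℝ) ≤ δ/4 - (t0 + x0)) (by linarith : (0:ℝ) ≤ δ/4 - (t1 + x1)),
    mul_nonneg (by linarith : (0:ℝ) ≤ δ/4 + (t0 + x0)) (by linarith : (0:ℝ) ≤ δ/4 + (t1 + x1)),
    mul_nonneg (by linarith : (0:ℝ) ≤ δ/4 - (t0 + x0)) (by linarith : (0:ℝ) ≤ δ/4 + (t1 + x1)),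
    mul_nonneg (by linarith : (0:ℝ) ≤ δ/4 + (t0 + x0)) (by linarith : (0:ℝ) ≤ δ/4 - (t1 + x1)),
    mul_nonneg (by linarith : (0:ℝ) ≤ δ/4 - (t0 + x0)) (by linarith : (0:ℝ) ≤ 1/2 - x1),
    mul_nonneg (by linarith : (0:ℝ) ≤ δ/4 + (t0 + x0)) (by linarith : (0:ℝ) ≤ 1/2 + x1),
    mul_nonneg (by linarith : (0:ℝ) ≤ δ/4 - (t0 + x0)) (by linarith : (0:ℝ) ≤ 1/2 + x1),
    mul_nonneg (by linarith : (0:ℝ) ≤ δ/4 + (t0 + x0)) (by linarith : (0:ℝ) ≤ 1/2 - x1),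
    mul_nonneg (by linarith : (0:ℝ) ≤ δ/4 - (t1 + x1)) (by linarith : (0:ℝ) ≤ 1/2 - x0),
    mul_nonneg (by linarith : (0:ℝ) ≤ δ/4 + (t1 + x1)) (by linarith : (0:ℝ) ≤ 1/2 + x0),
    mul_nonneg (by linarith : (0:ℝ) ≤ δ/4 - (t1 + x1)) (by linarith : (0:ℝ) ≤ 1/2 + x0),
    mul_nonneg (by linarith : (0:ℝ) ≤ δ/4 + (t1 + x1)) (by linarith : (0:ℝ) ≤ 1/2 - x0),
    mul_nonneg hδ0.le (by linarith : (0:ℝ) ≤ 1 - δ)]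

/-! ### Measure-theoretic infrastructure -/

lemma measurable_gammaM : Measurable gammaM := by
  refine measurable_pi_iff.mpr fun i => ?_
  fin_cases i <;> simp [gammaM] <;> fun_prop

noncomputable def Phi : ((Fin 2 → ℝ) × (Fin 3 → ℝ)) ≃ᵐ (Fin 5 → ℝ) :=
  (MeasurableEquiv.sumPiEquivProdPi (fun _ : Fin 2 ⊕ Fin 3 => ℝ)).symm.trans
    (MeasurableEquiv.piCongrLeft (fun _ => ℝ) finSumFinEquiv)

lemma Phi_mp : MeasurePreserving Phi volume volume :=
  (MeasureTheory.volume_measurePreserving_piCongrLeft (fun _ => ℝ) finSumFinEquiv).comp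
    (MeasureTheory.volume_measurePreserving_sumPiEquivProdPi_symm (fun _ : Fin 2 ⊕ Fin 3 => ℝ))

lemma Phi_aux (u : Fin 2 → ℝ) (v : Fin 3 → ℝ) (s : Fin 2 ⊕ Fin 3) :
    Phi (u, v) (finSumFinEquiv s) = Sum.elim u v s := by
  simp only [Phi, MeasurableEquiv.trans_apply,
    MeasurableEquiv.piCongrLeft_apply_apply]
  cases s <;> rfl

lemma Phi_apply (u : Fin 2 → ℝ) (v : Fin 3 → ℝ) :
    Phi (u, v) = ![u 0, u 1, v 0, v 1, v 2] := by
  funext i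
  fin_cases i
  · exact (Phi_aux u v (Sum.inl 0)).trans rfl
  · exact (Phi_aux u v (Sum.inl 1)).trans rfl
  · exact (Phi_aux u v (Sum.inr 0)).trans rfl
  · exact (Phi_aux u v (Sum.inr 1)).trans rfl
  · exact (Phi_aux u v (Sum.inr 2)).trans rfl

lemma measurable_proj2 : Measurable (fun y : Fin 5 → ℝ => (![y 0, y 1] : Fin 2 → ℝ)) := by
  refine measurable_pi_iff.mpr fun i => ?_
  fin_cases i <;> simp <;> exact measurable_pi_apply _

lemma measurable_proj3 : Measurable (fun y : Fin 5 → ℝ => (![y 2, y 3, y 4] : Fin 3 → ℝ)) := by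
  refine measurable_pi_iff.mpr fun i => ?_
  fin_cases i <;> simp <;> exact measurable_pi_apply _

lemma shearSet_measurable (g : (Fin 2 → ℝ) → (Fin 3 → ℝ)) (hg : Measurable g)
    (A : Set (Fin 2 → ℝ)) (B : Set (Fin 3 → ℝ)) (hA : MeasurableSet A) (hB : MeasurableSet B) :
    MeasurableSet {y : Fin 5 → ℝ | ![y 0, y 1] ∈ A ∧ ![y 2, y 3, y 4] - g ![y 0, y 1] ∈ B} := by
  apply MeasurableSet.inter
  · exact measurable_proj2 hA
  · exact (measurable_proj3.sub (hg.comp measurable_proj2)) hB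

lemma volume_shear (g : (Fin 2 → ℝ) → (Fin 3 → ℝ)) (hg : Measurable g)
    (A : Set (Fin 2 → ℝ)) (B : Set (Fin 3 → ℝ)) (hA : MeasurableSet A) (hB : MeasurableSet B) :
    volume {y : Fin 5 → ℝ | ![y 0, y 1] ∈ A ∧ ![y 2, y 3, y 4] - g ![y 0, y 1] ∈ B}
      = volume A * volume B := by
  set Z := {y : Fin 5 → ℝ | ![y 0, y 1] ∈ A ∧ ![y 2, y 3, y 4] - g ![y 0, y 1] ∈ B}
  have hZ : MeasurableSet Z := shearSet_measurable g hg A B hA hB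
  have hpre : Phi ⁻¹' Z = {p : (Fin 2 → ℝ) × (Fin 3 → ℝ) | p.1 ∈ A ∧ p.2 - g p.1 ∈ B} := by
    ext ⟨u, v⟩
    simp only [mem_preimage, Z, mem_setOf_eq, Phi_apply]
    rw [show (![![u 0, u 1, v 0, v 1, v 2] 0, ![u 0, u 1, v 0, v 1, v 2] 1] : Fin 2 → ℝ) = u by
        funext i; fin_cases i <;> rfl,
      show (![![u 0, u 1, v 0, v 1, v 2] 2, ![u 0, u 1, v 0, v 1, v 2] 3,
        ![u 0, u 1, v 0, v 1, v 2] 4] : Fin 3 → ℝ) = v by funext i; fin_cases i <;> rfl]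
  have h1 : volume Z = (volume.prod volume) (Phi ⁻¹' Z) :=
    (Phi_mp.measure_preimage hZ.nullMeasurableSet).symm
  rw [h1, hpre]
  have hW : MeasurableSet {p : (Fin 2 → ℝ) × (Fin 3 → ℝ) | p.1 ∈ A ∧ p.2 - g p.1 ∈ B} :=
    (measurable_fst hA).inter ((measurable_snd.sub (hg.comp measurable_fst)) hB)
  rw [Measure.prod_apply hW]
  have hslice : ∀ u : Fin 2 → ℝ,
      volume (Prod.mk u ⁻¹' {p : (Fin 2 → ℝ) × (Fin 3 → ℝ) | p.1 ∈ A ∧ p.2 - g p.1 ∈ B})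
        = A.indicator (fun _ => volume B) u := by
    intro u
    by_cases hu : u ∈ A
    · have : Prod.mk u ⁻¹' {p : (Fin 2 → ℝ) × (Fin 3 → ℝ) | p.1 ∈ A ∧ p.2 - g p.1 ∈ B}
          = (fun v => v - g u) ⁻¹' B := by
        ext v; simp [hu]
      rw [this, indicator_of_mem hu]
      simp only [sub_eq_add_neg]
      exact measure_preimage_add_right volume (-g u) B
    · have : Prod.mk u ⁻¹' {p : (Fin 2 → ℝ) × (Fin 3 → ℝ) | p.1 ∈ A ∧ p.2 - g p.1 ∈ B} = ∅ := by
        ext v; simp [hu]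
      rw [this, indicator_of_notMem hu]
      simp
  simp_rw [hslice]
  rw [lintegral_indicator hA]
  simp [mul_comm]

lemma hull_cases (x y : ℝ) (hyx : y ≤ x)
    (h : ((x : ℝ), (y : ℝ)) ∉ convexHull ℝ {((0 : ℝ), (0 : ℝ)), (1, 1), (5/8, 3/8)}) :
    5 * y < 3 * x ∨ 2 < 5 * x - 3 * y := by
  by_contra hcon
  push_neg at hcon
  obtain ⟨h1, h2⟩ := hcon
  apply h
  have hconv : Convex ℝ (convexHull ℝ {((0 : ℝ), (0 : ℝ)), (1, 1), (5/8, 3/8)}) :=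
    convex_convexHull ℝ _
  have hz : ∀ i : Fin 3, (![((0:ℝ),(0:ℝ)), (1,1), (5/8,3/8)] i)
      ∈ convexHull ℝ {((0 : ℝ), (0 : ℝ)), (1, 1), (5/8, 3/8)} := by
    intro i
    apply subset_convexHull
    fin_cases i <;> simp
  have := hconv.sum_mem (t := Finset.univ)
    (w := ![(2 - 5*x + 3*y)/2, (5*y - 3*x)/2, 4*(x - y)])
    (z := ![((0:ℝ),(0:ℝ)), (1,1), (5/8,3/8)])
    (fun i _ => by fin_cases i <;> simp <;> linarith)
    (by simp [Fin.sum_univ_three]; ring)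
    (fun i _ => hz i)
  convert this using 1
  simp [Fin.sum_univ_three, Prod.ext_iff, Prod.smul_mk, smul_eq_mul]
  constructor <;> ring

lemma integral_lb (S : Set (Fin 5 → ℝ)) (hS : MeasurableSet S) (x : Fin 5 → ℝ)
    (a b : Fin 2 → ℝ) (hab : a ≤ b) (hsub : Icc a b ⊆ Icc (-1) 1)
    (hmem : ∀ t ∈ Icc a b, x + gammaM t ∈ S) :
    (b 0 - a 0) * (b 1 - a 1)
      ≤ ∫ t in Icc (-1 : Fin 2 → ℝ) 1, S.indicator (fun _ => (1:ℝ)) (x + gammaM t) := by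
  have hmeas : Measurable fun t : Fin 2 → ℝ => S.indicator (fun _ => (1:ℝ)) (x + gammaM t) :=
    (measurable_const.indicator hS).comp (measurable_const.add measurable_gammaM)
  have hint : IntegrableOn (fun t => S.indicator (fun _ => (1:ℝ)) (x + gammaM t))
      (Icc (-1 : Fin 2 → ℝ) 1) volume := by
    apply Measure.integrableOn_of_bounded (M := 1) (isCompact_Icc.measure_lt_top).ne
      hmeas.aestronglyMeasurable
    filter_upwards with t
    rw [norm_indicator_eq_indicator_norm]
    classical
    by_cases hmem' : x + gammaM t ∈ S <;> simp [hmem']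
  have h1 : (b 0 - a 0) * (b 1 - a 1) = ∫ t in Icc a b, (1:ℝ) := by
    rw [setIntegral_const, smul_eq_mul, mul_one, measureReal_def, Real.volume_Icc_pi_toReal hab,
      Fin.prod_univ_two]
  rw [h1]
  have h2 : ∫ t in Icc a b, (1:ℝ)
      = ∫ t in Icc a b, S.indicator (fun _ => (1:ℝ)) (x + gammaM t) :=
    setIntegral_congr_fun measurableSet_Icc fun t ht =>
      (Set.indicator_of_mem (hmem t ht) (fun _ => (1:ℝ))).symm
  rw [h2]
  exact setIntegral_mono_set hint
    (Filter.Eventually.of_forall fun t => Set.indicator_nonneg (fun _ _ => zero_le_one) _)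
    (HasSubset.Subset.eventuallyLE hsub)

lemma skeleton (p q : ℝ≥0∞) (hp : 1 ≤ p) (hp' : p ≠ ∞) (hq : 1 ≤ q) (C : ℝ≥0)
    (hC : ∀ f : (Fin 5 → ℝ) → ℝ, MemLp f p volume → (∀ x, 0 ≤ f x) →
      eLpNorm (fun x => ∫ t in Icc (-1 : Fin 2 → ℝ) 1, f (x + gammaM t)) q volume
        ≤ C * eLpNorm f p volume)
    (S T : Set (Fin 5 → ℝ)) (hS : MeasurableSet S) (hT : MeasurableSet T)
    (va vb m : ℝ) (hva : 0 < va) (hvb : 0 < vb) (hm : 0 < m)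
    (hSvol : volume S = ENNReal.ofReal va) (hTvol : volume T = ENNReal.ofReal vb)
    (hlb : ∀ x ∈ T, m ≤ ∫ t in Icc (-1 : Fin 2 → ℝ) 1,
        S.indicator (fun _ => (1:ℝ)) (x + gammaM t)) :
    m * vb ^ q⁻¹.toReal ≤ (C : ℝ) * va ^ p⁻¹.toReal := by
  have hp0 : p ≠ 0 := fun h => by simp [h] at hp
  have hq0 : q ≠ 0 := fun h => by simp [h] at hq
  set f : (Fin 5 → ℝ) → ℝ := S.indicator (fun _ => (1:ℝ)) with hf_def
  have hfmem : MemLp f p volume :=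
    memLp_indicator_const p hS 1 (Or.inr (by rw [hSvol]; exact ENNReal.ofReal_ne_top))
  have hf0 : ∀ x, 0 ≤ f x := fun x => Set.indicator_nonneg (fun _ _ => zero_le_one) x
  have key := hC f hfmem hf0
  have hRnn : ∀ x : Fin 5 → ℝ,
      (0:ℝ) ≤ ∫ t in Icc (-1 : Fin 2 → ℝ) 1, f (x + gammaM t) := fun x =>
    setIntegral_nonneg measurableSet_Icc fun t _ => hf0 _
  have hmono : eLpNorm (T.indicator (fun _ => m)) q volume
      ≤ eLpNorm (fun x => ∫ t in Icc (-1 : Fin 2 → ℝ) 1, f (x + gammaM t)) q volume := by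
    apply eLpNorm_mono_real
    intro x
    by_cases hx : x ∈ T
    · rw [Set.indicator_of_mem hx, Real.norm_of_nonneg hm.le]
      exact hlb x hx
    · rw [Set.indicator_of_notMem hx]
      simpa using hRnn x
  have hTnorm : eLpNorm (T.indicator (fun _ => m)) q volume
      = ENNReal.ofReal m * (ENNReal.ofReal vb) ^ q⁻¹.toReal := by
    rw [eLpNorm_indicator_const' hT
      (by rw [hTvol]; exact (ENNReal.ofReal_pos.mpr hvb).ne') hq0, hTvol]
    congr 1
    · exact (Real.enorm_eq_ofReal hm.le)
    · rw [one_div, ← ENNReal.toReal_inv]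
  have hSnorm : eLpNorm f p volume = (ENNReal.ofReal va) ^ p⁻¹.toReal := by
    rw [hf_def, eLpNorm_indicator_const hS hp0 hp', hSvol, one_div, ← ENNReal.toReal_inv]
    simp
  have hineq : ENNReal.ofReal m * (ENNReal.ofReal vb) ^ q⁻¹.toReal
      ≤ (C : ℝ≥0∞) * (ENNReal.ofReal va) ^ p⁻¹.toReal := by
    calc ENNReal.ofReal m * (ENNReal.ofReal vb) ^ q⁻¹.toReal
        = eLpNorm (T.indicator (fun _ => m)) q volume := hTnorm.symm
      _ ≤ _ := hmono
      _ ≤ C * eLpNorm f p volume := key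
      _ = (C : ℝ≥0∞) * (ENNReal.ofReal va) ^ p⁻¹.toReal := by rw [hSnorm]
  have hrhs_ne : (C : ℝ≥0∞) * (ENNReal.ofReal va) ^ p⁻¹.toReal ≠ ∞ :=
    ENNReal.mul_ne_top ENNReal.coe_ne_top
      (ENNReal.rpow_ne_top_of_nonneg ENNReal.toReal_nonneg ENNReal.ofReal_ne_top)
  have := ENNReal.toReal_mono hrhs_ne hineq
  rwa [ENNReal.toReal_mul, ENNReal.toReal_mul, ← ENNReal.toReal_rpow,
    ← ENNReal.toReal_rpow, ENNReal.toReal_ofReal hm.le, ENNReal.toReal_ofReal hvb.le,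
    ENNReal.toReal_ofReal hva.le, ENNReal.coe_toReal] at this

lemma no_bound (c₁ c₂ e₁ e₂ : ℝ) (hc₁ : 0 < c₁) (hc₂ : 0 ≤ c₂) (he : e₁ < e₂)
    (h : ∀ δ : ℝ, 0 < δ → δ ≤ 1 → c₁ * δ ^ e₁ ≤ c₂ * δ ^ e₂) : False := by
  set ε := e₂ - e₁ with hε
  have hε0 : 0 < ε := by simp only [hε]; linarith
  set M := c₂ / c₁ with hM
  have hM0 : 0 ≤ M := div_nonneg hc₂ hc₁.le
  have hM1 : (1:ℝ) ≤ M + 1 := by linarith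
  set δ := (M + 1) ^ (-1 / ε) with hδdef
  have hδpos : 0 < δ := Real.rpow_pos_of_pos (by linarith) _
  have hδ1 : δ ≤ 1 := Real.rpow_le_one_of_one_le_of_nonpos hM1
    (div_nonpos_of_nonpos_of_nonneg (by norm_num) hε0.le)
  have hkey := h δ hδpos hδ1
  have h2 : c₁ * δ ^ (-ε) ≤ c₂ := by
    have hne : δ ^ e₂ > 0 := Real.rpow_pos_of_pos hδpos _
    have : c₁ * δ ^ e₁ / δ ^ e₂ ≤ c₂ := by
      rw [div_le_iff₀ hne]; exact hkey
    have heq : c₁ * δ ^ e₁ / δ ^ e₂ = c₁ * δ ^ (-ε) := by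
      rw [mul_div_assoc, ← Real.rpow_sub hδpos]
      congr 1
      simp only [hε]; ring_nf
    rwa [heq] at this
  have h3 : δ ^ (-ε) = M + 1 := by
    rw [hδdef, ← Real.rpow_mul (by linarith)]
    rw [show -1 / ε * -ε = 1 by field_simp]
    exact Real.rpow_one _
  rw [h3] at h2
  have hMe : c₁ * (M + 1) = c₂ + c₁ := by
    have : c₁ * M = c₂ := by
      rw [hM, mul_div_cancel₀ _ hc₁.ne']
    linarith [this]
  rw [hMe] at h2
  linarith

/-! ### The two counterexample families -/

noncomputable def gB : (Fin 2 → ℝ) → (Fin 3 → ℝ) := fun u => ![u 0 ^ 2, 2 * u 0 * u 1, u 1 ^ 2]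

lemma measurable_gB : Measurable gB := by
  refine measurable_pi_iff.mpr fun i => ?_
  fin_cases i <;> simp [gB] <;> fun_prop

noncomputable def SB (δ : ℝ) : Set (Fin 5 → ℝ) :=
  {y : Fin 5 → ℝ | ![y 0, y 1] ∈ Icc (fun _ => (-2:ℝ)) (fun _ => 2) ∧
    ![y 2, y 3, y 4] - gB ![y 0, y 1] ∈ Icc ![-(4*δ), -(7*δ), -(4*δ)] ![4*δ, 7*δ, 4*δ]}

lemma SB_meas (δ : ℝ) : MeasurableSet (SB δ) :=
  shearSet_measurable gB measurable_gB _ _ measurableSet_Icc measurableSet_Icc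

lemma SB_vol (δ : ℝ) (hδ0 : 0 < δ) : volume (SB δ) = ENNReal.ofReal (14336 * δ^3) := by
  rw [SB, volume_shear gB measurable_gB _ _ measurableSet_Icc measurableSet_Icc,
    Real.volume_Icc_pi, Real.volume_Icc_pi, Fin.prod_univ_two, Fin.prod_univ_three]
  simp only [Matrix.cons_val_zero, Matrix.cons_val_one, Matrix.head_cons,
    Matrix.cons_val_two, Matrix.tail_cons]
  rw [show (2:ℝ) - -2 = 4 by norm_num, show (4*δ:ℝ) - -(4*δ) = 8*δ by ring,
    show (7*δ:ℝ) - -(7*δ) = 14*δ by ring,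
    ← ENNReal.ofReal_mul (by norm_num : (0:ℝ) ≤ 4),
    ← ENNReal.ofReal_mul (by positivity : (0:ℝ) ≤ 8*δ),
    ← ENNReal.ofReal_mul (by positivity : (0:ℝ) ≤ 8*δ*(14*δ)),
    ← ENNReal.ofReal_mul (by norm_num : (0:ℝ) ≤ 4*4)]
  congr 1; ring

lemma cube_vol (δ : ℝ) (hδ0 : 0 < δ) :
    volume (Icc (fun _ : Fin 5 => -δ) (fun _ => δ)) = ENNReal.ofReal (32 * δ^5) := by
  rw [Real.volume_Icc_pi, Fin.prod_univ_five]
  rw [show δ - -δ = 2*δ by ring]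
  rw [← ENNReal.ofReal_mul (by positivity : (0:ℝ) ≤ 2*δ),
    ← ENNReal.ofReal_mul (by positivity : (0:ℝ) ≤ 2*δ*(2*δ)),
    ← ENNReal.ofReal_mul (by positivity : (0:ℝ) ≤ 2*δ*(2*δ)*(2*δ)),
    ← ENNReal.ofReal_mul (by positivity : (0:ℝ) ≤ 2*δ*(2*δ)*(2*δ)*(2*δ))]
  congr 1; ring

lemma memB (δ : ℝ) (hδ0 : 0 < δ) (hδ1 : δ ≤ 1) (x : Fin 5 → ℝ)
    (hx : x ∈ Icc (fun _ : Fin 5 => -δ) (fun _ => δ)) (t : Fin 2 → ℝ)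
    (ht : t ∈ Icc (-1 : Fin 2 → ℝ) 1) : x + gammaM t ∈ SB δ := by
  have hx1 : ∀ i, -δ ≤ x i := fun i => hx.1 i
  have hx2 : ∀ i, x i ≤ δ := fun i => hx.2 i
  have ht1 : ∀ i, (-1:ℝ) ≤ t i := fun i => ht.1 i
  have ht2 : ∀ i, t i ≤ 1 := fun i => ht.2 i
  refine ⟨⟨fun i => ?_, fun i => ?_⟩, ⟨fun i => ?_, fun i => ?_⟩⟩ <;> fin_cases i
  · simp [gammaM]; linarith [hx1 0, ht1 0, hδ1]
  · simp [gammaM]; linarith [hx1 1, ht1 1, hδ1]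
  · simp [gammaM]; linarith [hx2 0, ht2 0, hδ1]
  · simp [gammaM]; linarith [hx2 1, ht2 1, hδ1]
  · simp [gammaM, gB]
    linarith [(arB0 δ (x 0) (x 2) (t 0) hδ0 hδ1 (hx1 0) (hx2 0) (hx1 2) (hx2 2)
      (ht1 0) (ht2 0)).1]
  · simp [gammaM, gB]
    linarith [(arB1 δ (x 0) (x 1) (x 3) (t 0) (t 1) hδ0 hδ1 (hx1 0) (hx2 0) (hx1 1) (hx2 1)
      (hx1 3) (hx2 3) (ht1 0) (ht2 0) (ht1 1) (ht2 1)).1]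
  · simp [gammaM, gB]
    linarith [(arB0 δ (x 1) (x 4) (t 1) hδ0 hδ1 (hx1 1) (hx2 1) (hx1 4) (hx2 4)
      (ht1 1) (ht2 1)).1]
  · simp [gammaM, gB]
    linarith [(arB0 δ (x 0) (x 2) (t 0) hδ0 hδ1 (hx1 0) (hx2 0) (hx1 2) (hx2 2)
      (ht1 0) (ht2 0)).2]
  · simp [gammaM, gB]
    linarith [(arB1 δ (x 0) (x 1) (x 3) (t 0) (t 1) hδ0 hδ1 (hx1 0) (hx2 0) (hx1 1) (hx2 1)
      (hx1 3) (hx2 3) (ht1 0) (ht2 0) (ht1 1) (ht2 1)).2]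
  · simp [gammaM, gB]
    linarith [(arB0 δ (x 1) (x 4) (t 1) hδ0 hδ1 (hx1 1) (hx2 1) (hx1 4) (hx2 4)
      (ht1 1) (ht2 1)).2]

noncomputable def gA : (Fin 2 → ℝ) → (Fin 3 → ℝ) :=
  fun u => ![-(u 0 ^ 2), -(2 * u 0 * u 1), -(u 1 ^ 2)]

lemma measurable_gA : Measurable gA := by
  refine measurable_pi_iff.mpr fun i => ?_
  fin_cases i <;> simp [gA] <;> fun_prop

noncomputable def TA (δ : ℝ) : Set (Fin 5 → ℝ) :=
  {y : Fin 5 → ℝ | ![y 0, y 1] ∈ Icc (fun _ => (-(1:ℝ)/2)) (fun _ => 1/2) ∧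
    ![y 2, y 3, y 4] - gA ![y 0, y 1] ∈ Icc (fun _ => -(δ/4)) (fun _ => δ/4)}

lemma TA_meas (δ : ℝ) : MeasurableSet (TA δ) :=
  shearSet_measurable gA measurable_gA _ _ measurableSet_Icc measurableSet_Icc

lemma TA_vol (δ : ℝ) (hδ0 : 0 < δ) : volume (TA δ) = ENNReal.ofReal (δ^3/8) := by
  rw [TA, volume_shear gA measurable_gA _ _ measurableSet_Icc measurableSet_Icc,
    Real.volume_Icc_pi, Real.volume_Icc_pi, Fin.prod_univ_two, Fin.prod_univ_three]
  rw [show (1:ℝ)/2 - -(1:ℝ)/2 = 1 by norm_num, show (δ/4:ℝ) - -(δ/4) = δ/2 by ring]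
  rw [← ENNReal.ofReal_mul (by norm_num : (0:ℝ) ≤ 1),
    ← ENNReal.ofReal_mul (by positivity : (0:ℝ) ≤ δ/2),
    ← ENNReal.ofReal_mul (by positivity : (0:ℝ) ≤ δ/2*(δ/2)),
    ← ENNReal.ofReal_mul (by norm_num : (0:ℝ) ≤ 1*1)]
  congr 1; ring

lemma memA (δ : ℝ) (hδ0 : 0 < δ) (hδ1 : δ ≤ 1) (x : Fin 5 → ℝ) (hx : x ∈ TA δ)
    (t : Fin 2 → ℝ)
    (ht : t ∈ Icc ![-x 0 - δ/4, -x 1 - δ/4] ![-x 0 + δ/4, -x 1 + δ/4]) :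
    x + gammaM t ∈ Icc (fun _ : Fin 5 => -δ) (fun _ => δ) := by
  have hx0l : -(1:ℝ)/2 ≤ x 0 := by have := hx.1.1 0; simpa using this
  have hx0u : x 0 ≤ 1/2 := by have := hx.1.2 0; simpa using this
  have hx1l : -(1:ℝ)/2 ≤ x 1 := by have := hx.1.1 1; simpa using this
  have hx1u : x 1 ≤ 1/2 := by have := hx.1.2 1; simpa using this
  have hc0l : -(δ/4) ≤ x 2 + x 0 ^ 2 := by have := hx.2.1 0; simpa [gA] using this
  have hc0u : x 2 + x 0 ^ 2 ≤ δ/4 := by have := hx.2.2 0; simpa [gA] using this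
  have hc1l : -(δ/4) ≤ x 3 + 2 * x 0 * x 1 := by have := hx.2.1 1; simpa [gA] using this
  have hc1u : x 3 + 2 * x 0 * x 1 ≤ δ/4 := by have := hx.2.2 1; simpa [gA] using this
  have hc2l : -(δ/4) ≤ x 4 + x 1 ^ 2 := by have := hx.2.1 2; simpa [gA] using this
  have hc2u : x 4 + x 1 ^ 2 ≤ δ/4 := by have := hx.2.2 2; simpa [gA] using this
  have hu0l : -(δ/4) ≤ t 0 + x 0 := by have := ht.1 0; simp at this; linarith
  have hu0u : t 0 + x 0 ≤ δ/4 := by have := ht.2 0; simp at this; linarith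
  have hu1l : -(δ/4) ≤ t 1 + x 1 := by have := ht.1 1; simp at this; linarith
  have hu1u : t 1 + x 1 ≤ δ/4 := by have := ht.2 1; simp at this; linarith
  refine ⟨fun i => ?_, fun i => ?_⟩ <;> fin_cases i
  · simp [gammaM]; linarith
  · simp [gammaM]; linarith
  · simp [gammaM]
    linarith [(arA0 δ (x 0) (x 2) (t 0) hδ0 hδ1 hx0l hx0u hc0l hc0u hu0l hu0u).1]
  · simp [gammaM]
    linarith [(arA1 δ (x 0) (x 1) (x 3) (t 0) (t 1) hδ0 hδ1 hx0l hx0u hx1l hx1u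
      hc1l hc1u hu0l hu0u hu1l hu1u).1]
  · simp [gammaM]
    linarith [(arA0 δ (x 1) (x 4) (t 1) hδ0 hδ1 hx1l hx1u hc2l hc2u hu1l hu1u).1]
  · simp [gammaM]; linarith
  · simp [gammaM]; linarith
  · simp [gammaM]
    linarith [(arA0 δ (x 0) (x 2) (t 0) hδ0 hδ1 hx0l hx0u hc0l hc0u hu0l hu0u).2]
  · simp [gammaM]
    linarith [(arA1 δ (x 0) (x 1) (x 3) (t 0) (t 1) hδ0 hδ1 hx0l hx0u hx1l hx1u
      hc1l hc1u hu0l hu0u hu1l hu1u).2]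
  · simp [gammaM]
    linarith [(arA0 δ (x 1) (x 4) (t 1) hδ0 hδ1 hx1l hx1u hc2l hc2u hu1l hu1u).2]

end AuxSharp

/-- sharpness — if `q > p` and `(1/p, 1/q)` is outside the closed
triangle with vertices `(0,0)`, `(1,1)`, `(5/8, 3/8)`, no `L^p → L^q` bound holds
for the averaging operator over the maximal quadratic surface in `ℝ⁵`. -/
theorem statement1 (p q : ℝ≥0∞) (hp : 1 ≤ p) (hq : 1 ≤ q) (hpq : p < q)
    (h : (p⁻¹.toReal, q⁻¹.toReal) ∉
      convexHull ℝ {((0 : ℝ), (0 : ℝ)), (1, 1), (5/8, 3/8)}) :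
    ¬ ∃ C : ℝ≥0, ∀ f : (Fin 5 → ℝ) → ℝ, MemLp f p volume → (∀ x, 0 ≤ f x) →
      eLpNorm (fun x => ∫ t in Icc (-1 : Fin 2 → ℝ) 1, f (x + gammaM t)) q volume
        ≤ C * eLpNorm f p volume := by
  rintro ⟨C, hC⟩
  have hp' : p ≠ ∞ := hpq.ne_top
  have hp0 : p ≠ 0 := fun hh => by simp [hh] at hp
  set pr := p⁻¹.toReal with hprdef
  set qr := q⁻¹.toReal with hqrdef
  have hpinv_ne_top : p⁻¹ ≠ ∞ := ENNReal.inv_ne_top.mpr hp0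
  have hqr_le : qr ≤ pr :=
    ENNReal.toReal_mono hpinv_ne_top (ENNReal.inv_le_inv.mpr hpq.le)
  have hpr_pos : 0 < pr :=
    ENNReal.toReal_pos (ENNReal.inv_ne_zero.mpr hp') hpinv_ne_top
  have hqr_nonneg : 0 ≤ qr := ENNReal.toReal_nonneg
  rcases hull_cases pr qr hqr_le h with hcase | hcase
  · -- 5 qr < 3 pr : indicator of a thin neighborhood of the surface
    refine no_bound (4 * 32 ^ qr) ((C:ℝ) * 14336 ^ pr) (5*qr) (3*pr)
      (by positivity)
      (mul_nonneg C.coe_nonneg (Real.rpow_nonneg (by norm_num) _))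
      (by linarith) (fun δ hδ0 hδ1 => ?_)
    have hlb : ∀ x ∈ Icc (fun _ : Fin 5 => -δ) (fun _ => δ),
        (4:ℝ) ≤ ∫ t in Icc (-1 : Fin 2 → ℝ) 1,
          (SB δ).indicator (fun _ => (1:ℝ)) (x + gammaM t) := by
      intro x hx
      have h4 := integral_lb (SB δ) (SB_meas δ) x (-1) 1
        (fun i => by norm_num)
        (subset_refl _) (fun t ht => memB δ hδ0 hδ1 x hx t ht)
      have he : ((1:Fin 2 → ℝ) 0 - (-1:Fin 2 → ℝ) 0) * ((1:Fin 2 → ℝ) 1 - (-1:Fin 2 → ℝ) 1)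
          = 4 := by norm_num
      linarith [h4, he.ge]
    have hs := skeleton p q hp hp' hq C hC (SB δ) (Icc (fun _ : Fin 5 => -δ) (fun _ => δ))
      (SB_meas δ) measurableSet_Icc (14336 * δ^3) (32 * δ^5) 4
      (by positivity) (by positivity) (by norm_num)
      (SB_vol δ hδ0) (cube_vol δ hδ0) hlb
    have hL : ((32:ℝ) * δ^5) ^ qr = 32 ^ qr * δ ^ (5*qr) := by
      rw [Real.mul_rpow (by norm_num) (by positivity), ← Real.rpow_natCast δ 5,
        ← Real.rpow_mul hδ0.le]
      norm_num
    have hR : ((14336:ℝ) * δ^3) ^ pr = 14336 ^ pr * δ ^ (3*pr) := by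
      rw [Real.mul_rpow (by norm_num) (by positivity), ← Real.rpow_natCast δ 3,
        ← Real.rpow_mul hδ0.le]
      norm_num
    calc 4 * 32 ^ qr * δ ^ (5*qr) = 4 * ((32:ℝ) * δ^5) ^ qr := by rw [hL]; ring
      _ ≤ (C:ℝ) * ((14336:ℝ) * δ^3) ^ pr := hs
      _ = (C:ℝ) * 14336 ^ pr * δ ^ (3*pr) := by rw [hR]; ring
  · -- 2 < 5 pr - 3 qr : indicator of a small cube
    refine no_bound ((1/4) * (1/8) ^ qr) ((C:ℝ) * 32 ^ pr) (2 + 3*qr) (5*pr)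
      (by positivity)
      (mul_nonneg C.coe_nonneg (Real.rpow_nonneg (by norm_num) _))
      (by linarith) (fun δ hδ0 hδ1 => ?_)
    have hlb : ∀ x ∈ TA δ,
        δ^2/4 ≤ ∫ t in Icc (-1 : Fin 2 → ℝ) 1,
          (Icc (fun _ : Fin 5 => -δ) (fun _ => δ)).indicator (fun _ => (1:ℝ)) (x + gammaM t) := by
      intro x hx
      have hx0l : -(1:ℝ)/2 ≤ x 0 := by have := hx.1.1 0; simpa using this
      have hx0u : x 0 ≤ 1/2 := by have := hx.1.2 0; simpa using this
      have hx1l : -(1:ℝ)/2 ≤ x 1 := by have := hx.1.1 1; simpa using this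
      have hx1u : x 1 ≤ 1/2 := by have := hx.1.2 1; simpa using this
      have hab : (![-x 0 - δ/4, -x 1 - δ/4] : Fin 2 → ℝ) ≤ ![-x 0 + δ/4, -x 1 + δ/4] := by
        intro i; fin_cases i <;> simp <;> linarith
      have hsub : Icc (![-x 0 - δ/4, -x 1 - δ/4] : Fin 2 → ℝ) ![-x 0 + δ/4, -x 1 + δ/4]
          ⊆ Icc (-1) 1 := by
        intro t ht
        refine ⟨fun i => ?_, fun i => ?_⟩ <;> fin_cases i
        · have := ht.1 0; simp at this ⊢; linarith
        · have := ht.1 1; simp at this ⊢; linarith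
        · have := ht.2 0; simp at this ⊢; linarith
        · have := ht.2 1; simp at this ⊢; linarith
      have h4 := integral_lb (Icc (fun _ : Fin 5 => -δ) (fun _ => δ)) measurableSet_Icc x
        (![-x 0 - δ/4, -x 1 - δ/4]) (![-x 0 + δ/4, -x 1 + δ/4]) hab hsub
        (fun t ht => memA δ hδ0 hδ1 x hx t ht)
      simp only [Matrix.cons_val_zero, Matrix.cons_val_one, Matrix.head_cons] at h4
      have he : (-x 0 + δ/4 - (-x 0 - δ/4)) * (-x 1 + δ/4 - (-x 1 - δ/4)) = δ^2/4 := by ring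
      linarith [h4, he.ge]
    have hs := skeleton p q hp hp' hq C hC (Icc (fun _ : Fin 5 => -δ) (fun _ => δ)) (TA δ)
      measurableSet_Icc (TA_meas δ) (32 * δ^5) (δ^3/8) (δ^2/4)
      (by positivity) (by positivity) (by positivity)
      (cube_vol δ hδ0) (TA_vol δ hδ0) hlb
    have hL : ((δ:ℝ)^3/8) ^ qr = (1/8) ^ qr * δ ^ (3*qr) := by
      rw [show (δ:ℝ)^3/8 = (1/8) * δ^3 by ring,
        Real.mul_rpow (by norm_num) (by positivity), ← Real.rpow_natCast δ 3,
        ← Real.rpow_mul hδ0.le]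
      norm_num
    have hR : ((32:ℝ) * δ^5) ^ pr = 32 ^ pr * δ ^ (5*pr) := by
      rw [Real.mul_rpow (by norm_num) (by positivity), ← Real.rpow_natCast δ 5,
        ← Real.rpow_mul hδ0.le]
      norm_num
    have h2 : δ ^ ((2:ℝ) + 3*qr) = δ^2 * δ ^ (3*qr) := by
      rw [Real.rpow_add hδ0]
      congr 1
      rw [show ((2:ℝ)) = ((2:ℕ):ℝ) by norm_num, Real.rpow_natCast]
    calc (1/4) * (1/8) ^ qr * δ ^ (2 + 3*qr) = (δ^2/4) * ((δ:ℝ)^3/8) ^ qr := by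
          rw [hL, h2]; ring
      _ ≤ (C:ℝ) * ((32:ℝ) * δ^5) ^ pr := hs
      _ = (C:ℝ) * 32 ^ pr * δ ^ (5*pr) := by rw [hR]; ring
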